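/- If a squarefree positive integer α is congruent, then α is the area of infinitely many pairwise non-equal right triangles with positive rational sides. -/

import Mathlib

local notation "v2" => padicValRat 2



lemma v2_two : v2 (2:ℚ) = 1 := padicValRat.self one_lt_two

lemma v2_pow (n : ℕ) : v2 ((2:ℚ)^n) = n := by
  rw [padicValRat.pow _, v2_two, mul_one]




lemma v2_int_odd (m : ℤ) (h : Odd m) : v2 ((m:ℚ)) = 0 := by
  rw [padicValRat.of_int, padicValInt.eq_zero_of_not_dvd]
  · simp
  · rw [Int.odd_iff] at h; omega

lemma v2_int_ge3 (m : ℤ) (h : m ≠ 0) (h8 : (8:ℤ) ∣ m) : 3 ≤ v2 ((m:ℚ)) := by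
  rw [padicValRat.of_int]
  have := (padicValInt_dvd_iff (p := 2) 3 m).mp (by push_cast; exact h8)
  rcases this with h' | h'
  · exact absurd h' h
  · exact_mod_cast h'

lemma num_den_odd (u : ℚ) (hu : u ≠ 0) (h : v2 u = 0) : Odd u.num ∧ Odd (u.den : ℤ) := by
  have hd := u.reduced
  have hnum : u.num ≠ 0 := Rat.num_ne_zero.mpr hu
  have hv : padicValRat 2 u = padicValInt 2 u.num - padicValNat 2 u.den := by
    rw [padicValRat_def]
  rw [h] at hv
  by_cases h2 : (2:ℤ) ∣ u.num
  · -- then den odd, padicValNat den = 0, so padicValInt num = 0, contradiction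
    exfalso
    have hden : ¬ (2 ∣ u.den) := by
      intro hdd
      have : (2 : ℕ) ∣ Nat.gcd u.num.natAbs u.den := Nat.dvd_gcd (by omega) hdd
      rw [hd] at this; omega
    have h0 : padicValNat 2 u.den = 0 := padicValNat.eq_zero_of_not_dvd hden
    have h1 : 1 ≤ padicValInt 2 u.num := by
      rcases (padicValInt_dvd_iff (p := 2) 1 u.num).mp (by push_cast; simpa using h2) with h'|h'
      · exact absurd h' hnum
      · exact h'
    omega
  · have hden : Odd (u.den : ℤ) := by
      by_contra hdd
      rw [Int.not_odd_iff_even] at hdd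
      have hdd' : (2:ℕ) ∣ u.den := by
        rcases hdd with ⟨k, hk⟩; exact ⟨k.natAbs, by omega⟩
      have h1 : 1 ≤ padicValNat 2 u.den :=
        one_le_padicValNat_of_dvd u.den_nz hdd'
      have h0 : padicValInt 2 u.num = 0 := padicValInt.eq_zero_of_not_dvd (by exact_mod_cast h2)
      omega
    exact ⟨Int.odd_iff.mpr (by omega), hden⟩

lemma odd_sq_sub (a b : ℤ) (ha : Odd a) (hb : Odd b) : (8:ℤ) ∣ a^2 - b^2 := by
  obtain ⟨x, rfl⟩ := ha; obtain ⟨y, rfl⟩ := hb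
  obtain ⟨s, hs⟩ := Int.even_mul_succ_self x
  obtain ⟨t, ht⟩ := Int.even_mul_succ_self y
  exact ⟨s - t, by ring_nf; nlinarith [hs, ht]⟩

lemma oddsq (u : ℚ) (hu : u ≠ 0) (h : v2 u = 0) : u^2 = 1 ∨ 3 ≤ v2 (u^2 - 1) := by
  obtain ⟨hn, hd⟩ := num_den_odd u hu h
  have hden : ((u.den:ℤ):ℚ) ≠ 0 := by exact_mod_cast u.den_nz
  have hu' : u = (u.num : ℚ) / ((u.den:ℤ):ℚ) := by exact_mod_cast (Rat.num_div_den u).symm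
  by_cases hsq : u.num^2 = (u.den:ℤ)^2
  · left
    rw [hu']; field_simp; exact_mod_cast hsq
  · right
    have hnum_eq : (u.num : ℚ) = u * (u.den : ℚ) := by
      have h' := Rat.num_div_den u
      rw [div_eq_iff (by exact_mod_cast u.den_nz)] at h'
      exact h'
    have key : u^2 - 1 = ((u.num^2 - (u.den:ℤ)^2 : ℤ) : ℚ) / (((u.den:ℤ)^2 : ℤ) : ℚ) := by
      push_cast
      rw [eq_div_iff (by positivity)]
      push_cast at hnum_eq
      linear_combination (-(u * (u.den:ℚ)) - (u.num:ℚ)) * hnum_eq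
    rw [key, padicValRat.div (by exact_mod_cast sub_ne_zero.mpr hsq) (by positivity)]
    have h1 : 3 ≤ v2 ((u.num^2 - (u.den:ℤ)^2 : ℤ) : ℚ) :=
      v2_int_ge3 _ (sub_ne_zero.mpr hsq) (odd_sq_sub _ _ hn hd)
    have h2 : v2 (((u.den:ℤ)^2 : ℤ) : ℚ) = 0 := v2_int_odd _ (by
      obtain ⟨k, hk⟩ := hd; exact ⟨2*k^2+2*k, by rw [hk]; ring⟩)
    omega




lemma val_key (e : ℕ) (he : e ≤ 1) (w : ℤ) (hw : Odd w) (s : ℚ) (hs : 0 < s)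
    (hne : s^2 ≠ (2:ℚ)^(4+2*e) * (w:ℚ)^2) :
    (v2 s ≤ 0 → v2 ((s^2 + (2:ℚ)^(4+2*e)*(w:ℚ)^2)^2 /
        (4*s*(s^2 - (2:ℚ)^(4+2*e)*(w:ℚ)^2))) = v2 s - 2)
    ∧ (0 < v2 s → v2 ((s^2 + (2:ℚ)^(4+2*e)*(w:ℚ)^2)^2 /
        (4*s*(s^2 - (2:ℚ)^(4+2*e)*(w:ℚ)^2))) ≤ 0) := by
  have hw0 : w ≠ 0 := by rintro rfl; simp [Int.odd_iff] at hw
  set k : ℚ := (2:ℚ)^(4+2*e)*(w:ℚ)^2 with hkdef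
  have hwq : ((w:ℚ)) ≠ 0 := Int.cast_ne_zero.mpr hw0
  have hk0 : 0 < k := by rw [hkdef]; positivity
  have hvk : v2 k = (4:ℤ)+2*e := by
    rw [hkdef, padicValRat.mul (by positivity) (by positivity), v2_pow,
        padicValRat.pow _, v2_int_odd w hw]
    push_cast; ring
  have hs0 : s ≠ 0 := ne_of_gt hs
  have hs2 : (0:ℚ) < s^2 := by positivity
  have hsum0 : s^2 + k ≠ 0 := by positivity
  have hsub0 : s^2 - k ≠ 0 := sub_ne_zero.mpr hne
  have hden0 : 4*s*(s^2-k) ≠ 0 := mul_ne_zero (mul_ne_zero (by norm_num) hs0) hsub0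
  have hv4 : v2 (4:ℚ) = 2 := by
    have h4 : (4:ℚ) = 2^2 := by norm_num
    rw [h4, v2_pow]; norm_num
  have hvs2 : v2 (s^2) = 2 * v2 s := by
    rw [padicValRat.pow _]; push_cast; ring
  have hexp : v2 ((s^2+k)^2 / (4*s*(s^2-k)))
      = 2 * v2 (s^2+k) - (2 + v2 s + v2 (s^2-k)) := by
    rw [padicValRat.div (pow_ne_zero 2 hsum0) hden0, padicValRat.pow _,
        padicValRat.mul (mul_ne_zero (by norm_num : (4:ℚ) ≠ 0) hs0) hsub0,
        padicValRat.mul (by norm_num : (4:ℚ) ≠ 0) hs0, hv4]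
    push_cast; ring
  set t := v2 s with htdef
  rcases lt_trichotomy (2*t) ((4:ℤ)+2*e) with hlt | heq | hgt
  · have hA : v2 (s^2 + k) = 2*t := by
      rw [padicValRat.add_eq_of_lt hsum0 (ne_of_gt hs2) (ne_of_gt hk0)
        (by rw [hvs2, hvk]; exact hlt), hvs2]
    have hB : v2 (s^2 - k) = 2*t := by
      rw [sub_eq_add_neg, padicValRat.add_eq_of_lt (by rwa [← sub_eq_add_neg])
        (ne_of_gt hs2) (neg_ne_zero.mpr (ne_of_gt hk0))
        (by rw [hvs2, padicValRat.neg, hvk]; exact hlt), hvs2]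
    rw [hexp, hA, hB]
    exact ⟨fun _ => by omega, fun _ => by omega⟩
  · have ht : t = 2 + (e:ℤ) := by omega
    constructor
    · intro hcon; omega
    · intro _
      set u : ℚ := s / 2^(2+e) with hudef
      have hpw : ((2:ℚ)^(2+e)) ≠ 0 := by positivity
      have hu0 : u ≠ 0 := div_ne_zero hs0 hpw
      have hvu : v2 u = 0 := by
        rw [hudef, padicValRat.div hs0 hpw, v2_pow, ← htdef]; push_cast; omega
      have hsu : s = 2^(2+e) * u := by rw [hudef]; field_simp
      have hpow2 : ((2:ℚ)^(2+e))^2 = 2^(4+2*e) := by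
        rw [← pow_mul]; congr 1; omega
      have hs2k : s^2 + k = 2^(4+2*e) * (u^2 + (w:ℚ)^2) := by
        rw [hsu, hkdef, mul_pow, hpow2]; ring
      have hs2k' : s^2 - k = 2^(4+2*e) * (u^2 - (w:ℚ)^2) := by
        rw [hsu, hkdef, mul_pow, hpow2]; ring
      have hwv : v2 ((w:ℚ)) = 0 := v2_int_odd w hw
      have hu2pos : 0 < u^2 := by positivity
      have hw2pos : 0 < (w:ℚ)^2 := by positivity
      have hsumidw : u^2 + (w:ℚ)^2 ≠ 0 := by positivity
      -- v2 (u^2 + w^2) = 1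
      have hvsum : v2 (u^2 + (w:ℚ)^2) = 1 := by
        have hx : u^2 + (w:ℚ)^2 = 2 + ((u^2 - 1) + ((w:ℚ)^2 - 1)) := by ring
        have hr : (u^2-1) + ((w:ℚ)^2-1) = 0 ∨ 3 ≤ v2 ((u^2-1) + ((w:ℚ)^2-1)) := by
          rcases oddsq u hu0 hvu with h1 | h1 <;>
            rcases oddsq (w:ℚ) hwq hwv with h2 | h2
          · left; rw [h1, h2]; ring
          · right
            have h1' : u^2 - 1 = 0 := by rw [h1]; ring
            rw [h1', zero_add]; exact h2
          · right
            have h2' : (w:ℚ)^2 - 1 = 0 := by rw [h2]; ring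
            rw [h2', add_zero]; exact h1
          · right
            have hu1 : u^2 - 1 ≠ 0 := by
              intro h0; rw [h0, padicValRat.zero] at h1; omega
            have hw1 : (w:ℚ)^2 - 1 ≠ 0 := by
              intro h0; rw [h0, padicValRat.zero] at h2; omega
            have hne0 : (u^2-1) + ((w:ℚ)^2-1) ≠ 0 := by
              intro h0
              have hw2 : (w:ℚ)^2 ≠ 1 := fun hh => hw1 (by rw [hh]; ring)
              have hw2z : w^2 ≠ 1 := by
                intro hh; apply hw2
                rw [show ((w:ℚ)^2) = ((w^2:ℤ):ℚ) by push_cast; ring, hh]; norm_num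
              obtain ⟨m, rfl⟩ := hw
              have h9 : (9:ℤ) ≤ (2*m+1)^2 := by
                rcases (by omega : 1 ≤ m ∨ m ≤ -2 ∨ m = 0 ∨ m = -1) with hm|hm|rfl|rfl
                · nlinarith
                · nlinarith
                · simp at hw2z
                · norm_num at hw2z
              have h9q : (9:ℚ) ≤ ((2*m+1:ℤ):ℚ)^2 := by
                calc (9:ℚ) = ((9:ℤ):ℚ) := by norm_num
                  _ ≤ (((2*m+1)^2:ℤ):ℚ) := by exact_mod_cast h9
                  _ = ((2*m+1:ℤ):ℚ)^2 := by push_cast; ring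
              nlinarith [hu2pos, h0, h9q]
            refine le_trans (le_min h1 ?_) (padicValRat.min_le_padicValRat_add hne0)
            exact h2
        rcases hr with h0 | h3
        · rw [hx, h0, add_zero, v2_two]
        · have hne2 : (2:ℚ) + ((u^2-1) + ((w:ℚ)^2-1)) ≠ 0 := by rw [← hx]; exact hsumidw
          have hrne : (u^2-1) + ((w:ℚ)^2-1) ≠ 0 := by
            intro h0; rw [h0, padicValRat.zero] at h3; omega
          rw [hx, padicValRat.add_eq_of_lt hne2 (by norm_num) hrne (by rw [v2_two]; omega), v2_two]
      have hA : v2 (s^2+k) = ((4:ℤ)+2*e) + 1 := by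
        rw [hs2k, padicValRat.mul (by positivity) hsumidw, v2_pow, hvsum]
        push_cast; ring
      have hdiff0 : u^2 - (w:ℚ)^2 ≠ 0 := by
        intro h0; apply hsub0; rw [hs2k', h0, mul_zero]
      have hvdiff : 3 ≤ v2 (u^2 - (w:ℚ)^2) := by
        have hx : u^2 - (w:ℚ)^2 = (u^2 - 1) + (-((w:ℚ)^2 - 1)) := by ring
        rcases oddsq u hu0 hvu with h1 | h1 <;>
          rcases oddsq (w:ℚ) hwq hwv with h2 | h2
        · exfalso; apply hdiff0; rw [h1, h2]; ring
        · have h1' : u^2 - 1 = 0 := by rw [h1]; ring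
          rw [hx, h1', zero_add, padicValRat.neg]; exact h2
        · have h2' : (w:ℚ)^2 - 1 = 0 := by rw [h2]; ring
          rw [hx, h2', neg_zero, add_zero]; exact h1
        · rw [hx]
          refine le_trans (le_min h1 ?_) (padicValRat.min_le_padicValRat_add (by rw [← hx]; exact hdiff0))
          rw [padicValRat.neg]; exact h2
      have hB : ((4:ℤ)+2*e) + 3 ≤ v2 (s^2-k) := by
        rw [hs2k', padicValRat.mul (by positivity) hdiff0, v2_pow]
        push_cast; omega
      rw [hexp, hA]
      omega
  · have hA : v2 (s^2 + k) = (4:ℤ)+2*e := by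
      rw [add_comm (s^2) k, padicValRat.add_eq_of_lt (by rwa [add_comm]) (ne_of_gt hk0)
        (ne_of_gt hs2) (by rw [hvs2, hvk]; exact hgt), hvk]
    have hB : v2 (s^2 - k) = (4:ℤ)+2*e := by
      have hrw : s^2 - k = -k + s^2 := by ring
      rw [hrw, padicValRat.add_eq_of_lt (by rw [← hrw]; exact hsub0)
        (neg_ne_zero.mpr (ne_of_gt hk0)) (ne_of_gt hs2)
        (by rw [hvs2, padicValRat.neg, hvk]; exact hgt), padicValRat.neg, hvk]
    rw [hexp, hA, hB]
    exact ⟨fun hcon => by omega, fun _ => by omega⟩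


/-- No isoceles rational right triangle (√2 irrational). -/
lemma no_isoceles (p c : ℚ) (hp : 0 < p) (h : p^2 + p^2 = c^2) : False := by
  have hp0 : p ≠ 0 := ne_of_gt hp
  have h2 : ((c/p : ℚ) : ℝ)^2 = 2 := by
    have hq : (c/p)^2 = 2 := by
      field_simp
      linarith
    exact_mod_cast congrArg (fun x : ℚ => (x : ℝ)) hq
  apply irrational_sqrt_two
  refine ⟨|c/p|, ?_⟩
  have hsq : Real.sqrt 2 = |((c/p:ℚ):ℝ)| := by
    rw [← h2, Real.sqrt_sq_eq_abs]
  rw [hsq]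
  push_cast
  ring

def IsTri (α : ℤ) (T : ℚ × ℚ × ℚ) : Prop :=
  0 < T.1 ∧ T.1 < T.2.1 ∧ 0 < T.2.2 ∧ T.1^2 + T.2.1^2 = T.2.2^2 ∧ T.1 * T.2.1 = 2*(α:ℚ)

def step (T : ℚ × ℚ × ℚ) : ℚ × ℚ × ℚ :=
  (min ((T.2.1^2 - T.1^2)/(2*T.2.2)) (2*T.1*T.2.1*T.2.2/(T.2.1^2 - T.1^2)),
   max ((T.2.1^2 - T.1^2)/(2*T.2.2)) (2*T.1*T.2.1*T.2.2/(T.2.1^2 - T.1^2)),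
   (T.2.2^4 + 4*T.1^2*T.2.1^2)/(2*T.2.2*(T.2.1^2 - T.1^2)))

lemma step_isTri (α : ℤ) (T : ℚ × ℚ × ℚ) (h : IsTri α T) : IsTri α (step T) := by
  obtain ⟨a, b, c⟩ := T
  obtain ⟨ha, hab, hc, hpyth, harea⟩ := h
  simp only at ha hab hc hpyth harea
  have hb : 0 < b := lt_trans ha hab
  have hd : 0 < b^2 - a^2 := by nlinarith
  set p := (b^2 - a^2)/(2*c) with hpdef
  set q := 2*a*b*c/(b^2 - a^2) with hqdef
  set c' := (c^4 + 4*a^2*b^2)/(2*c*(b^2 - a^2)) with hc'def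
  have hp : 0 < p := by rw [hpdef]; positivity
  have hq : 0 < q := by rw [hqdef]; positivity
  have hc' : 0 < c' := by rw [hc'def]; positivity
  have key : (c^4 + 4*a^2*b^2)^2 = (b^2-a^2)^4 + 16*a^2*b^2*c^4 := by
    linear_combination (-(c^2 + a^2 + b^2)) * (c^4 - 4*a^2*b^2 + (b^2-a^2)^2) * hpyth
  have hpq : p^2 + q^2 = c'^2 := by
    have e1 : p^2 + q^2 = ((b^2-a^2)^4 + 16*a^2*b^2*c^4)/(4*c^2*(b^2-a^2)^2) := by
      rw [hpdef, hqdef]; field_simp; ring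
    have e2 : c'^2 = ((c^4 + 4*a^2*b^2)^2)/(4*c^2*(b^2-a^2)^2) := by
      rw [hc'def]; field_simp; ring
    rw [e1, e2, key]
  have hprod : p * q = a * b := by
    rw [hpdef, hqdef]; field_simp
  have hne : p ≠ q := by
    intro hh
    exact no_isoceles p c' hp (by rw [hh] at hpq ⊢; linarith [hpq])
  refine ⟨?_, ?_, ?_, ?_, ?_⟩
  · exact lt_min hp hq
  · exact min_lt_max.mpr hne
  · exact hc'
  · show (min p q)^2 + (max p q)^2 = c'^2
    rcases le_total p q with h' | h'
    · rw [min_eq_left h', max_eq_right h']; exact hpq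
    · rw [min_eq_right h', max_eq_left h']; linarith [hpq]
  · show (min p q) * (max p q) = 2*(α:ℚ)
    rw [min_mul_max, hprod, harea]

lemma hyp_step (α : ℤ) (T : ℚ × ℚ × ℚ) (h : IsTri α T) :
    (step T).2.2^2 = ((T.2.2^2)^2 + 16*(α:ℚ)^2)^2 /
      (4*(T.2.2^2)*((T.2.2^2)^2 - 16*(α:ℚ)^2)) := by
  obtain ⟨a, b, c⟩ := T
  obtain ⟨ha, hab, hc, hpyth, harea⟩ := h
  simp only at ha hab hc hpyth harea ⊢
  have hb : 0 < b := lt_trans ha hab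
  have hd : 0 < b^2 - a^2 := by nlinarith
  have h16 : 16*(α:ℚ)^2 = 4*a^2*b^2 := by
    linear_combination (-4*(a*b + 2*(α:ℚ))) * harea
  have hfac : (c^2)^2 - 16*(α:ℚ)^2 = (b^2-a^2)^2 := by
    rw [h16]
    linear_combination (-(c^2 + a^2 + b^2)) * hpyth
  rw [show (step (a,b,c)).2.2 = (c^4 + 4*a^2*b^2)/(2*c*(b^2 - a^2)) from rfl]
  rw [hfac, h16]
  field_simp
  ring

lemma alpha_decomp (α : ℤ) (hsf : Squarefree α) : ∃ e : ℕ, e ≤ 1 ∧ ∃ w : ℤ, Odd w ∧ α = 2^e * w := by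
  rcases Int.even_or_odd α with he | ho
  · obtain ⟨w, hw⟩ := he
    refine ⟨1, le_refl 1, w, ?_, by omega⟩
    by_contra hodd
    rw [Int.not_odd_iff_even] at hodd
    obtain ⟨x, hx⟩ := hodd
    have hdvd : (2:ℤ) * 2 ∣ α := ⟨x, by omega⟩
    have := hsf 2 hdvd
    rw [Int.isUnit_iff] at this
    omega
  · exact ⟨0, by omega, α, ho, by ring⟩


/-- Corollary 8: if a squarefree positive integer `α` is congruent, then it is the area of
infinitely many (pairwise distinct) right triangles with positive rational sides.  Triangles
are normalised by `a ≤ b`, so distinct triples correspond to distinct triangles. -/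
theorem congruent_infinitely_many_triangles (α : ℤ) (hsf : Squarefree α) (hpos : 0 < α)
    (h : ∃ a b c : ℚ, 0 < a ∧ 0 < b ∧ 0 < c ∧ a ^ 2 + b ^ 2 = c ^ 2 ∧
      a * b = 2 * (α : ℚ)) :
    {t : ℚ × ℚ × ℚ | 0 < t.1 ∧ 0 < t.2.1 ∧ 0 < t.2.2 ∧ t.1 ≤ t.2.1 ∧
      t.1 ^ 2 + t.2.1 ^ 2 = t.2.2 ^ 2 ∧ t.1 * t.2.1 = 2 * (α : ℚ)}.Infinite := by
  obtain ⟨a, b, c, ha, hb, hc, hpyth, harea⟩ := h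
  obtain ⟨e, he, w, hw, hαw⟩ := alpha_decomp α hsf
  have hk16 : (16:ℚ)*(α:ℚ)^2 = (2:ℚ)^(4+2*e)*(w:ℚ)^2 := by
    rw [hαw]; push_cast; ring
  have hab : a ≠ b := by
    intro hh
    rw [hh] at hpyth
    exact no_isoceles b c hb hpyth
  set T0 : ℚ × ℚ × ℚ := (min a b, max a b, c) with hT0def
  have hT0 : IsTri α T0 := by
    refine ⟨lt_min ha hb, min_lt_max.mpr hab, hc, ?_, ?_⟩
    · show (min a b)^2 + (max a b)^2 = c^2
      rcases le_total a b with h' | h'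
      · rw [min_eq_left h', max_eq_right h']; exact hpyth
      · rw [min_eq_right h', max_eq_left h']; linarith
    · show min a b * max a b = 2*(α:ℚ)
      rw [min_mul_max]; exact harea
  set Tn : ℕ → ℚ × ℚ × ℚ := fun n => step^[n] T0 with hTndef
  have hTsucc : ∀ n, Tn (n+1) = step (Tn n) := fun n => Function.iterate_succ_apply' step n T0
  have hTn : ∀ n, IsTri α (Tn n) := by
    intro n; induction n with
    | zero => exact hT0
    | succ n ih => rw [hTsucc n]; exact step_isTri α _ ih
  have hstepval : ∀ n,
      (v2 ((Tn n).2.2^2) ≤ 0 → v2 ((Tn (n+1)).2.2^2) = v2 ((Tn n).2.2^2) - 2) ∧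
      (0 < v2 ((Tn n).2.2^2) → v2 ((Tn (n+1)).2.2^2) ≤ 0) := by
    intro n
    obtain ⟨h1, h2, h3, h4, h5⟩ := hTn n
    set s := (Tn n).2.2^2 with hsdef
    have hs : 0 < s := by rw [hsdef]; positivity
    have hd : 0 < (Tn n).2.1^2 - (Tn n).1^2 := by nlinarith
    have hfac : s^2 - 16*(α:ℚ)^2 = ((Tn n).2.1^2 - (Tn n).1^2)^2 := by
      have h16 : 16*(α:ℚ)^2 = 4*(Tn n).1^2*(Tn n).2.1^2 := by
        linear_combination (-4*((Tn n).1*(Tn n).2.1 + 2*(α:ℚ))) * h5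
      rw [hsdef, h16]
      linear_combination (-((Tn n).2.2^2 + (Tn n).1^2 + (Tn n).2.1^2)) * h4
    have hsne : s^2 ≠ (2:ℚ)^(4+2*e)*(w:ℚ)^2 := by
      rw [← hk16]
      intro hh
      rw [hh] at hfac
      nlinarith [hfac, hd]
    have heq : (Tn (n+1)).2.2^2 = (s^2 + (2:ℚ)^(4+2*e)*(w:ℚ)^2)^2 /
        (4*s*(s^2 - (2:ℚ)^(4+2*e)*(w:ℚ)^2)) := by
      rw [hTsucc n, hyp_step α _ (hTn n), hk16]
    rw [heq]
    exact val_key e he w hw s hs hsne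
  have hv1 : v2 ((Tn 1).2.2^2) ≤ 0 := by
    rcases le_or_gt (v2 ((Tn 0).2.2^2)) 0 with h' | h'
    · have h'' := (hstepval 0).1 h'
      norm_num at h'' h' ⊢
      omega
    · exact (hstepval 0).2 h'
  have hdec : ∀ j : ℕ, v2 ((Tn (j+2)).2.2^2) = v2 ((Tn 2).2.2^2) - 2*(j:ℤ) ∧
      v2 ((Tn (j+2)).2.2^2) ≤ 0 := by
    intro j; induction j with
    | zero =>
      have h'' := (hstepval 1).1 hv1
      norm_num at h'' hv1 ⊢
      omega
    | succ j ih =>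
      have hstep := (hstepval (j+2)).1 ih.2
      have hj : j + 1 + 2 = (j + 2) + 1 := by omega
      rw [hj]
      constructor
      · rw [hstep]; rw [ih.1]; push_cast; ring
      · rw [hstep]; omega
  apply Set.infinite_of_injective_forall_mem (f := fun j : ℕ => Tn (j+2))
  · intro i j hij
    have hcc : (Tn (i+2)).2.2 = (Tn (j+2)).2.2 := congrArg (fun t : ℚ × ℚ × ℚ => t.2.2) hij
    have hvv : v2 ((Tn (i+2)).2.2^2) = v2 ((Tn (j+2)).2.2^2) := by rw [hcc]
    have hi := (hdec i).1
    have hj := (hdec j).1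
    rw [hi, hj] at hvv
    omega
  · intro j
    obtain ⟨g1, g2, g3, g4, g5⟩ := hTn (j+2)
    exact ⟨g1, lt_trans g1 g2, g3, le_of_lt g2, g4, g5⟩
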